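/- Define (T v)(s) := −∫_s^1 v(θ) dθ for square-integrable v on (0,1). Then for every positive integer n, the function v_n defined by v_n(s) = n for s ∈ (0,1/n) and v_n(s) = 0 otherwise satisfies (T v_n)(s) = ns − 1 for s ∈ (0,1/n) and (T v_n)(s) = 0 for s ∈ [1/n,1), with ∫₀¹ (T v_n)(s)·v_n(s) ds = −1/2 and ∫₀¹ (T v_n)(s)² ds = 1/(3n). Consequently, there is no ω ∈ ℝ such that ∫₀¹ (T v)(s)·(−v(s)) ds ≤ ω ∫₀¹ (T v)(s)² ds for all square-integrable v on (0,1). -/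

import Mathlib

open MeasureTheory

set_option maxHeartbeats 1000000 in
/-- for the PIE operator `(T v)(s) = −∫ₛ¹ v` of the ill-posed transport
equation and `v_n = n·𝟙_{(0,1/n)}`, one has `T v_n = (ns−1)𝟙_{(0,1/n)}`, `⟨T v_n, v_n⟩ = −1/2`
and `‖T v_n‖² = 1/(3n)`; consequently no rate `ω` satisfies the dissipativity condition
`⟨T v, −v⟩ ≤ ω ⟨T v, T v⟩` for all square-integrable `v`. -/
theorem ill_posed_transport_dissipativity_fails
    (T : (ℝ → ℝ) → ℝ → ℝ)
    (hT : ∀ (v : ℝ → ℝ) (s : ℝ), T v s = -∫ θ in s..(1:ℝ), v θ)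
    (vn : ℕ → ℝ → ℝ)
    (hvn : ∀ (n : ℕ) (s : ℝ), vn n s = if s ∈ Set.Ioo (0:ℝ) (1 / (n : ℝ)) then (n : ℝ) else 0) :
    (∀ n : ℕ, 1 ≤ n →
      (∀ s ∈ Set.Ioo (0:ℝ) (1 / (n : ℝ)), T (vn n) s = (n : ℝ) * s - 1) ∧
      (∀ s ∈ Set.Ico (1 / (n : ℝ)) (1:ℝ), T (vn n) s = 0) ∧
      (∫ s in (0:ℝ)..1, T (vn n) s * vn n s = -(1 / 2)) ∧
      (∫ s in (0:ℝ)..1, (T (vn n) s) ^ 2 = 1 / (3 * (n : ℝ)))) ∧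
    ¬∃ ω : ℝ, ∀ v : ℝ → ℝ, Measurable v →
      MeasureTheory.IntegrableOn (fun s => (v s) ^ 2) (Set.Ioo 0 1) →
      (∫ s in (0:ℝ)..1, T v s * (-(v s))) ≤ ω * ∫ s in (0:ℝ)..1, (T v s) ^ 2 := by
  have main : ∀ n : ℕ, 1 ≤ n →
      (∀ s ∈ Set.Ioo (0:ℝ) (1 / (n : ℝ)), T (vn n) s = (n : ℝ) * s - 1) ∧
      (∀ s ∈ Set.Ico (1 / (n : ℝ)) (1:ℝ), T (vn n) s = 0) ∧
      (∫ s in (0:ℝ)..1, T (vn n) s * vn n s = -(1 / 2)) ∧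
      (∫ s in (0:ℝ)..1, (T (vn n) s) ^ 2 = 1 / (3 * (n : ℝ))) := by
    intro n hn
    set c : ℝ := 1 / (n : ℝ) with hcdef
    have hnpos : (0:ℝ) < n := by exact_mod_cast hn
    have hc0 : 0 < c := by positivity
    have hc1 : c ≤ 1 := by
      rw [hcdef, div_le_one hnpos]; exact_mod_cast hn
    have hnc : (n:ℝ) * c = 1 := mul_one_div_cancel (ne_of_gt hnpos)
    have hind : ∀ s, vn n s = Set.indicator (Set.Ioo 0 c) (fun _ => (n:ℝ)) s := by
      intro s; rw [hvn, Set.indicator_apply]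
    -- key evaluation of T (vn n)
    have hTeval : ∀ s : ℝ, 0 ≤ s → s ≤ 1 →
        T (vn n) s = if s < c then (n:ℝ)*s - 1 else 0 := by
      intro s hs0 hs1
      rw [hT, intervalIntegral.integral_of_le hs1,
        setIntegral_congr_fun measurableSet_Ioc (fun x _ => hind x),
        setIntegral_indicator measurableSet_Ioo]
      have hset : Set.Ioc s 1 ∩ Set.Ioo 0 c = Set.Ioo s c := by
        ext x
        simp only [Set.mem_inter_iff, Set.mem_Ioc, Set.mem_Ioo]
        constructor
        · rintro ⟨⟨h1, h2⟩, h3, h4⟩; exact ⟨h1, h4⟩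
        · rintro ⟨h1, h2⟩
          exact ⟨⟨h1, le_trans h2.le hc1⟩, lt_of_le_of_lt hs0 h1, h2⟩
      rw [hset, setIntegral_const, measureReal_def, Real.volume_Ioo, smul_eq_mul]
      by_cases h : s < c
      · rw [if_pos h, ENNReal.toReal_ofReal (by linarith)]
        nlinarith [hnc]
      · rw [if_neg h, ENNReal.ofReal_eq_zero.mpr (by linarith)]
        simp
    have hsub : Set.Ioo 0 c ⊆ Set.Ioc (0:ℝ) 1 :=
      fun x hx => ⟨hx.1, le_trans hx.2.le hc1⟩
    have hIoc : Set.Ioc (0:ℝ) 1 ∩ Set.Ioo 0 c = Set.Ioo 0 c :=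
      Set.inter_eq_self_of_subset_right hsub
    have hI1 : ∫ s in (0:ℝ)..1, T (vn n) s * vn n s = -(1 / 2) := by
      rw [intervalIntegral.integral_of_le zero_le_one,
        setIntegral_congr_fun (g := Set.indicator (Set.Ioo 0 c) (fun s => ((n:ℝ)*s - 1)*n))
          measurableSet_Ioc ?_,
        setIntegral_indicator measurableSet_Ioo, hIoc,
        ← MeasureTheory.integral_Ioc_eq_integral_Ioo,
        ← intervalIntegral.integral_of_le hc0.le]
      · have hpoly : ∫ s in (0:ℝ)..c, ((n:ℝ)*s - 1)*(n:ℝ) = (n:ℝ)*(n:ℝ)*(c^2/2) - c*(n:ℝ) := by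
          have h : ∀ s : ℝ, ((n:ℝ)*s-1)*(n:ℝ) = ((n:ℝ)*(n:ℝ)) * s - (n:ℝ) := by intro s; ring
          rw [intervalIntegral.integral_congr (g := fun s => ((n:ℝ)*(n:ℝ))*s - (n:ℝ)) (fun s _ => h s),
            intervalIntegral.integral_sub (f := fun s => ((n:ℝ)*(n:ℝ))*s) (g := fun _ => (n:ℝ))
              ((continuous_const.mul continuous_id').intervalIntegrable _ _)
              intervalIntegrable_const,
            intervalIntegral.integral_const_mul, integral_id, intervalIntegral.integral_const]
          simp only [smul_eq_mul, mul_one]; ring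
        rw [hpoly]
        nlinarith [hnc]
      · intro s hs
        show T (vn n) s * vn n s = _
        rw [hTeval s hs.1.le hs.2, hind s, Set.indicator_apply, Set.indicator_apply]
        by_cases hsc : s ∈ Set.Ioo 0 c
        · rw [if_pos hsc, if_pos hsc, if_pos hsc.2]
        · rw [if_neg hsc, if_neg hsc, mul_zero]
    have hI2 : ∫ s in (0:ℝ)..1, (T (vn n) s) ^ 2 = 1 / (3 * (n:ℝ)) := by
      rw [intervalIntegral.integral_of_le zero_le_one,
        setIntegral_congr_fun (g := Set.indicator (Set.Ioo 0 c) (fun s => ((n:ℝ)*s - 1)^2))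
          measurableSet_Ioc ?_,
        setIntegral_indicator measurableSet_Ioo, hIoc,
        ← MeasureTheory.integral_Ioc_eq_integral_Ioo,
        ← intervalIntegral.integral_of_le hc0.le]
      · have hpoly : ∫ s in (0:ℝ)..c, ((n:ℝ)*s - 1)^2 = (n:ℝ)^2*(c^3/3) - (n:ℝ)*c^2 + c := by
          have h : ∀ s : ℝ, ((n:ℝ)*s-1)^2 = (n:ℝ)^2 * s^2 - 2*(n:ℝ)*s + 1 := by intro s; ring
          rw [intervalIntegral.integral_congr
              (g := fun s => (n:ℝ)^2*s^2 - (2*(n:ℝ))*s + 1) (fun s _ => h s),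
            intervalIntegral.integral_add (f := fun s => (n:ℝ)^2*s^2 - (2*(n:ℝ))*s) (g := fun _ => (1:ℝ))
              (((continuous_const.mul (continuous_pow 2)).sub
                (continuous_const.mul continuous_id')).intervalIntegrable _ _)
              intervalIntegrable_const,
            intervalIntegral.integral_sub (f := fun s => (n:ℝ)^2*s^2) (g := fun s => (2*(n:ℝ))*s)
              ((continuous_const.mul (continuous_pow 2)).intervalIntegrable _ _)
              ((continuous_const.mul continuous_id').intervalIntegrable _ _),
            intervalIntegral.integral_const_mul, intervalIntegral.integral_const_mul,
            integral_id, integral_pow, intervalIntegral.integral_const]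
          push_cast
          simp only [smul_eq_mul, mul_one]; ring
        rw [hpoly, hcdef]
        field_simp
        ring
      · intro s hs
        show (T (vn n) s) ^ 2 = _
        rw [hTeval s hs.1.le hs.2, Set.indicator_apply]
        by_cases hsc : s ∈ Set.Ioo 0 c
        · rw [if_pos hsc, if_pos hsc.2]
        · have hlt : ¬ s < c := fun hlt => hsc ⟨hs.1, hlt⟩
          rw [if_neg hlt, if_neg hsc]
          norm_num
    refine ⟨fun s hs => ?_, fun s hs => ?_, hI1, hI2⟩
    · rw [hTeval s hs.1.le (lt_of_lt_of_le hs.2 hc1).le, if_pos hs.2]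
    · rw [hTeval s (le_trans hc0.le hs.1) hs.2.le, if_neg (not_lt.mpr hs.1)]
  refine ⟨main, ?_⟩
  rintro ⟨ω, hω⟩
  set n : ℕ := max 1 ⌈ω⌉₊ with hndef
  have hn1 : 1 ≤ n := le_max_left _ _
  obtain ⟨-, -, hI1, hI2⟩ := main n hn1
  have hnpos : (0:ℝ) < n := by exact_mod_cast hn1
  have hωn : ω ≤ (n:ℝ) := le_trans (Nat.le_ceil ω) (by exact_mod_cast le_max_right 1 ⌈ω⌉₊)
  have hmeas : Measurable (vn n) := by
    have : vn n = Set.indicator (Set.Ioo 0 (1/(n:ℝ))) (fun _ => (n:ℝ)) := by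
      funext s; rw [hvn, Set.indicator_apply]
    rw [this]
    exact measurable_const.indicator measurableSet_Ioo
  have hint : MeasureTheory.IntegrableOn (fun s => (vn n s) ^ 2) (Set.Ioo 0 1) := by
    have heq : (fun s => (vn n s) ^ 2)
        = Set.indicator (Set.Ioo 0 (1/(n:ℝ))) (fun _ => (n:ℝ)^2) := by
      funext s; rw [hvn, Set.indicator_apply]
      by_cases hs : s ∈ Set.Ioo (0:ℝ) (1/(n:ℝ))
      · rw [if_pos hs, if_pos hs]
      · rw [if_neg hs, if_neg hs]; norm_num
    rw [heq]
    exact (integrable_const _).indicator measurableSet_Ioo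
  have hkey := hω (vn n) hmeas hint
  have hLHS : ∫ s in (0:ℝ)..1, T (vn n) s * (-(vn n s)) = 1/2 := by
    simp only [mul_neg]
    rw [intervalIntegral.integral_neg, hI1]
    norm_num
  rw [hLHS, hI2] at hkey
  have h13 : ω * (1 / (3 * (n:ℝ))) ≤ (n:ℝ) * (1 / (3 * (n:ℝ))) :=
    mul_le_mul_of_nonneg_right hωn (by positivity)
  have : (n:ℝ) * (1 / (3 * (n:ℝ))) = 1/3 := by field_simp
  linarith
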